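/- Let f : ℝ → ℝ be continuously differentiable and let h ∈ ℝ. Define the map Φ : ℝ² → ℝ² by Φ(x, v) = (X, V) where X = x + h v + ½ h² f(x) and V = v + ½ h (f(x) + f(X)). Then Φ is everywhere differentiable and the determinant of its Jacobian matrix equals 1 at every point (x, v); i.e., the one-dimensional integrator defined by Φ is area-preserving (symplectic). -/

import Mathlib

/-- The one-step update map `Φ(x, v) = (X, V)`,
`X = x + h v + ½ h² f(x)`, `V = v + ½ h (f(x) + f(X))`, with `f` continuously
differentiable, is everywhere differentiable and its Jacobian determinant is
identically 1: the one-degree-of-freedom integrator is area-preserving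
(symplectic). -/
theorem stmt_8 (f : ℝ → ℝ) (hf : ContDiff ℝ 1 f) (h : ℝ) :
    let Φ : ℝ × ℝ → ℝ × ℝ := fun p =>
      (p.1 + h * p.2 + (1 / 2) * h ^ 2 * f p.1,
       p.2 + (1 / 2) * h * (f p.1 + f (p.1 + h * p.2 + (1 / 2) * h ^ 2 * f p.1)))
    ∀ p : ℝ × ℝ, DifferentiableAt ℝ Φ p ∧
      LinearMap.det ((fderiv ℝ Φ p) : (ℝ × ℝ) →ₗ[ℝ] (ℝ × ℝ)) = 1 := by
  intro Φ p
  obtain ⟨x, v⟩ := p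
  have hfd : ∀ y : ℝ, HasDerivAt f (deriv f y) y :=
    fun y => (hf.differentiable one_ne_zero y).hasDerivAt
  set a := deriv f x with ha
  set X := x + h * v + (1 / 2) * h ^ 2 * f x with hX
  set b := deriv f X with hb
  set fst := ContinuousLinearMap.fst ℝ ℝ ℝ
  set snd := ContinuousLinearMap.snd ℝ ℝ ℝ
  set L1 : ℝ × ℝ →L[ℝ] ℝ := fst + h • snd + ((1/2) * h^2 * a) • fst with hL1
  have h1 : HasFDerivAt (fun p : ℝ × ℝ => p.1 + h * p.2 + (1 / 2) * h ^ 2 * f p.1)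
      L1 (x, v) := by
    have := HasFDerivAt.const_mul (𝕜 := ℝ)
      ((hfd x).comp_hasFDerivAt (x, v) (hasFDerivAt_fst : HasFDerivAt Prod.fst (ContinuousLinearMap.fst ℝ ℝ ℝ) (x, v))) ((1/2) * h^2)
    have h2 := (hasFDerivAt_fst : HasFDerivAt Prod.fst (ContinuousLinearMap.fst ℝ ℝ ℝ) (x, v)).add ((hasFDerivAt_snd : HasFDerivAt Prod.snd (ContinuousLinearMap.snd ℝ ℝ ℝ) (x, v)).const_mul h)
    have h3 := h2.add this
    convert h3 using 1
    all_goals try rfl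
    ext <;> (simp [hL1, fst, snd, ha]; try ring)
  set L2 : ℝ × ℝ →L[ℝ] ℝ := snd + ((1/2) * h) • (a • fst + b • L1) with hL2
  have h2 : HasFDerivAt (fun p : ℝ × ℝ =>
      p.2 + (1 / 2) * h * (f p.1 + f (p.1 + h * p.2 + (1 / 2) * h ^ 2 * f p.1)))
      L2 (x, v) := by
    have hfX := (hfd X).comp_hasFDerivAt (x, v) h1
    have hfx := (hfd x).comp_hasFDerivAt (x, v) (hasFDerivAt_fst : HasFDerivAt Prod.fst (ContinuousLinearMap.fst ℝ ℝ ℝ) (x, v))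
    have := (hasFDerivAt_snd : HasFDerivAt Prod.snd (ContinuousLinearMap.snd ℝ ℝ ℝ) (x, v)).add
      (HasFDerivAt.const_mul (𝕜 := ℝ) (hfx.add hfX) ((1/2) * h))
    convert this using 1
    all_goals try rfl
  have hΦ : HasFDerivAt Φ (L1.prod L2) (x, v) := h1.prodMk h2
  refine ⟨hΦ.differentiableAt, ?_⟩
  rw [hΦ.fderiv]
  rw [← LinearMap.det_toMatrix (Module.Basis.finTwoProd ℝ)]
  rw [Matrix.det_fin_two]
  simp [LinearMap.toMatrix_apply, hL1, hL2, fst, snd]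
  ring
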